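/- Let ω : ℝ²₊ × [0,T] → [0,∞) satisfy supp ω(·,t) ⊆ [n1(t), n2] × [0,∞) with 0 < n1(t) ≤ n2, and u1((x1,x2), t) = −x1·∬_{(x1,x2)+S_α} (y1 y2/|y|⁴)·ω(y,t) dy. Then for any x2 ≥ 0, −u1((n1(t), x2), t) ≤ ‖ω(·,t)‖_∞ · n1(t) · log(n2/n1(t)). -/

import Mathlib

open Set MeasureTheory Filter

lemma aux_inner (y1 x2 : ℝ) (h1 : 0 < y1) (hx2 : 0 ≤ x2) :
    IntegrableOn (fun y2 => y1 * y2 / (y1 ^ 2 + y2 ^ 2) ^ 2) (Set.Ioi x2) ∧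
    ∫ y2 in Set.Ioi x2, y1 * y2 / (y1 ^ 2 + y2 ^ 2) ^ 2
      = y1 / (2 * (y1 ^ 2 + x2 ^ 2)) := by
  set F : ℝ → ℝ := fun y => -(y1 / 2) * (y1 ^ 2 + y ^ 2)⁻¹ with hF
  have hderiv : ∀ y ∈ Set.Ici x2, HasDerivAt F (y1 * y / (y1 ^ 2 + y ^ 2) ^ 2) y := by
    intro y _
    have hne : (y1 ^ 2 + y ^ 2) ≠ 0 := by positivity
    have h : HasDerivAt (fun y : ℝ => y1 ^ 2 + y ^ 2) (2 * y) y := by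
      simpa using (hasDerivAt_pow 2 y).const_add (y1 ^ 2)
    have h2 : HasDerivAt (fun y => -(y1 / 2) * (y1 ^ 2 + y ^ 2)⁻¹)
        (-(y1 / 2) * (-(2 * y) / (y1 ^ 2 + y ^ 2) ^ 2)) y := (h.inv hne).const_mul (-(y1 / 2))
    convert h2 using 1
    ring
  have hnonneg : ∀ y ∈ Set.Ioi x2, 0 ≤ y1 * y / (y1 ^ 2 + y ^ 2) ^ 2 := by
    intro y hy
    have : 0 ≤ y := le_trans hx2 (le_of_lt hy)
    positivity
  have htend : Tendsto F atTop (nhds 0) := by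
    have h1 : Tendsto (fun y : ℝ => y1 ^ 2 + y ^ 2) atTop atTop :=
      tendsto_atTop_add_const_left _ _ (tendsto_pow_atTop (two_ne_zero))
    have := (h1.inv_tendsto_atTop).const_mul (-(y1 / 2))
    simpa [F, neg_mul] using this
  constructor
  · exact integrableOn_Ioi_deriv_of_nonneg' hderiv hnonneg htend
  · rw [integral_Ioi_of_hasDerivAt_of_nonneg' hderiv hnonneg htend]
    have hne : (y1 ^ 2 + x2 ^ 2) ≠ 0 := by positivity
    simp only [F]
    field_simp
    ring

/-- Velocity bound at the left edge of the support:
`−u1((n1,x2),t) ≤ ‖ω‖_∞ · n1 · log(n2/n1)` when `ω ≥ 0` is bounded by `Mω`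
and supported in `[n1,n2]×[0,∞)`. -/
theorem stmt_11 (α n1 n2 Mω : ℝ) (hα : 0 < α) (hn1 : 0 < n1) (hn12 : n1 ≤ n2)
    (ω : ℝ × ℝ → ℝ)
    (hpos : ∀ y, 0 ≤ ω y) (hbd : ∀ y, ω y ≤ Mω)
    (hsupp : ∀ y : ℝ × ℝ, ω y ≠ 0 → y ∈ Set.Icc n1 n2 ×ˢ Set.Ici (0 : ℝ)) :
    ∀ x2 : ℝ, 0 ≤ x2 →
      n1 * ∫ y in {z : ℝ × ℝ | 0 ≤ z.1 - n1 ∧ 0 ≤ z.2 - x2 ∧ z.2 - x2 ≤ α * (z.1 - n1)},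
          (y.1 * y.2 / (y.1 ^ 2 + y.2 ^ 2) ^ 2) * ω y ≤
        Mω * n1 * Real.log (n2 / n1) := by
  intro x2 hx2
  have hMω : 0 ≤ Mω := le_trans (hpos 0) (hbd 0)
  have hlog : 0 ≤ Real.log (n2 / n1) :=
    Real.log_nonneg (by rw [le_div_iff₀ hn1]; linarith)
  set S : Set (ℝ × ℝ) :=
    {z : ℝ × ℝ | 0 ≤ z.1 - n1 ∧ 0 ≤ z.2 - x2 ∧ z.2 - x2 ≤ α * (z.1 - n1)} with hS
  set A : Set (ℝ × ℝ) := Set.Icc n1 n2 ×ˢ Set.Ici x2 with hA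
  set k : ℝ × ℝ → ℝ := fun y => y.1 * y.2 / (y.1 ^ 2 + y.2 ^ 2) ^ 2 with hk
  have hSmeas : MeasurableSet S := by
    apply MeasurableSet.inter
    · exact measurableSet_le measurable_const (measurable_fst.sub measurable_const)
    apply MeasurableSet.inter
    · exact measurableSet_le measurable_const (measurable_snd.sub measurable_const)
    · exact measurableSet_le (measurable_snd.sub measurable_const)
        ((measurable_fst.sub measurable_const).const_mul α)
  have hAmeas : MeasurableSet A := measurableSet_Icc.prod measurableSet_Ici
  have hkmeas : Measurable k := by
    apply Measurable.div
    · exact measurable_fst.mul measurable_snd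
    · exact ((measurable_fst.pow_const 2).add (measurable_snd.pow_const 2)).pow_const 2
  -- integrability of `k` on `A`
  have hkA : IntegrableOn k A := by
    rw [hA, IntegrableOn, Measure.volume_eq_prod, ← Measure.prod_restrict]
    have hInt2 : IntegrableOn (fun y2 => n1 * y2 / (n1 ^ 2 + y2 ^ 2) ^ 2) (Set.Ioi x2) :=
      (aux_inner n1 x2 hn1 hx2).1
    have hconst : Integrable (fun _ : ℝ => n2 / n1) (volume.restrict (Set.Icc n1 n2)) :=
      integrable_const _
    have hprod := hconst.mul_prod ((integrableOn_Ici_iff_integrableOn_Ioi (by simp)).2 hInt2)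
    refine hprod.mono' (hkmeas.aestronglyMeasurable) ?_
    rw [Measure.prod_restrict, ← hA]
    filter_upwards [ae_restrict_mem hAmeas] with z hz
    obtain ⟨⟨hz1l, hz1r⟩, hz2⟩ := hz
    have hz2' : 0 ≤ z.2 := le_trans hx2 hz2
    have hz1 : 0 < z.1 := lt_of_lt_of_le hn1 hz1l
    have hknn : 0 ≤ k z := by simp only [hk]; positivity
    rw [Real.norm_of_nonneg hknn]
    have : z.1 * z.2 / (z.1 ^ 2 + z.2 ^ 2) ^ 2 ≤ n2 / n1 * (n1 * z.2 / (n1 ^ 2 + z.2 ^ 2) ^ 2) := by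
      have hrw : n2 / n1 * (n1 * z.2 / (n1 ^ 2 + z.2 ^ 2) ^ 2)
          = n2 * z.2 / (n1 ^ 2 + z.2 ^ 2) ^ 2 := by
        field_simp
      rw [hrw]
      have hden : (n1 ^ 2 + z.2 ^ 2) ^ 2 ≤ (z.1 ^ 2 + z.2 ^ 2) ^ 2 :=
        pow_le_pow_left₀ (by positivity) (by nlinarith) 2
      exact div_le_div₀ (mul_nonneg (by linarith) hz2')
        (mul_le_mul_of_nonneg_right hz1r hz2') (by positivity) hden
    exact this
  have hkApos : 0 ≤ᵐ[volume.restrict A] k := by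
    filter_upwards [ae_restrict_mem hAmeas] with z hz
    obtain ⟨⟨hz1l, _⟩, hz2⟩ := hz
    have hz2' : 0 ≤ z.2 := le_trans hx2 hz2
    have hz1 : 0 < z.1 := lt_of_lt_of_le hn1 hz1l
    simp only [hk]; positivity
  -- value of the integral over `A`
  have hAval : ∫ y in A, k y ≤ Real.log (n2 / n1) := by
    have hkA' : IntegrableOn k (Set.Icc n1 n2 ×ˢ Set.Ici x2) (volume.prod volume) := by
      rwa [← Measure.volume_eq_prod, ← hA]
    have hfub : ∫ y in A, k y = ∫ y1 in Set.Icc n1 n2, ∫ y2 in Set.Ici x2, k (y1, y2) := by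
      rw [hA, Measure.volume_eq_prod]
      exact setIntegral_prod k hkA'
    rw [hfub]
    have hinner : ∀ y1 ∈ Set.Icc n1 n2,
        ∫ y2 in Set.Ici x2, k (y1, y2) = y1 / (2 * (y1 ^ 2 + x2 ^ 2)) := by
      intro y1 hy1
      have h1 : 0 < y1 := lt_of_lt_of_le hn1 hy1.1
      rw [integral_Ici_eq_integral_Ioi]
      exact (aux_inner y1 x2 h1 hx2).2
    rw [setIntegral_congr_fun measurableSet_Icc hinner]
    have hmono : ∫ y1 in Set.Icc n1 n2, y1 / (2 * (y1 ^ 2 + x2 ^ 2))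
        ≤ ∫ y1 in Set.Icc n1 n2, 1 / y1 := by
      apply setIntegral_mono_on
      · apply ContinuousOn.integrableOn_Icc
        apply ContinuousOn.div (continuousOn_id) (by fun_prop)
        intro y1 hy1
        have h1 : 0 < y1 := lt_of_lt_of_le hn1 hy1.1
        positivity
      · apply ContinuousOn.integrableOn_Icc
        apply ContinuousOn.div continuousOn_const continuousOn_id
        intro y1 hy1
        exact ne_of_gt (lt_of_lt_of_le hn1 hy1.1)
      · exact measurableSet_Icc
      · intro y1 hy1
        have h1 : 0 < y1 := lt_of_lt_of_le hn1 hy1.1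
        rw [div_le_div_iff₀ (by positivity) h1]
        nlinarith [sq_nonneg x2]
    refine le_trans hmono (le_of_eq ?_)
    rw [integral_Icc_eq_integral_Ioc, ← intervalIntegral.integral_of_le hn12]
    apply integral_one_div
    intro h0
    rcases Set.mem_uIcc.1 h0 with h | h
    · linarith [h.1]
    · linarith [h.1, h.2]
  -- now the main estimate
  have hmain : ∫ y in S, k y * ω y ≤ Mω * Real.log (n2 / n1) := by
    by_cases hint : IntegrableOn (fun y => k y * ω y) S
    · have hb : ∀ y ∈ S, k y * ω y ≤ A.indicator (fun y => Mω * k y) y := by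
        intro y hy
        obtain ⟨hy1, hy2, _⟩ := hy
        have hy1' : 0 < y.1 := lt_of_lt_of_le hn1 (by linarith)
        have hy2' : 0 ≤ y.2 := le_trans hx2 (by linarith)
        have hknn : 0 ≤ k y := by simp only [hk]; positivity
        by_cases hω : ω y = 0
        · have : (0:ℝ) ≤ A.indicator (fun y => Mω * k y) y := by
            apply Set.indicator_nonneg
            intro z hz
            obtain ⟨⟨hz1l, _⟩, hz2⟩ := hz
            have : 0 < z.1 := lt_of_lt_of_le hn1 hz1l
            have : 0 ≤ z.2 := le_trans hx2 hz2
            simp only [hk]; positivity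
          simpa [hω] using this
        · have hyA : y ∈ A := by
            obtain ⟨hyIcc, _⟩ := hsupp y hω
            exact ⟨hyIcc, Set.mem_Ici.2 (by linarith)⟩
          rw [Set.indicator_of_mem hyA]
          calc k y * ω y ≤ k y * Mω := mul_le_mul_of_nonneg_left (hbd y) hknn
            _ = Mω * k y := mul_comm _ _
      have hgint : Integrable (A.indicator (fun y => Mω * k y)) :=
        IntegrableOn.integrable_indicator (hkA.const_mul Mω) hAmeas
      calc ∫ y in S, k y * ω y
          ≤ ∫ y in S, A.indicator (fun y => Mω * k y) y :=
            setIntegral_mono_on hint (hgint.integrableOn) hSmeas hb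
        _ = ∫ y in S ∩ A, Mω * k y := setIntegral_indicator hAmeas
        _ ≤ ∫ y in A, Mω * k y := by
            apply setIntegral_mono_set (hkA.const_mul Mω)
            · filter_upwards [hkApos] with z hz using mul_nonneg hMω hz
            · exact HasSubset.Subset.eventuallyLE Set.inter_subset_right
        _ = Mω * ∫ y in A, k y := integral_const_mul Mω _
        _ ≤ Mω * Real.log (n2 / n1) := mul_le_mul_of_nonneg_left hAval hMω
    · rw [integral_undef hint]
      positivity
  calc n1 * ∫ y in S, k y * ω y ≤ n1 * (Mω * Real.log (n2 / n1)) :=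
        mul_le_mul_of_nonneg_left hmain hn1.le
    _ = Mω * n1 * Real.log (n2 / n1) := by ring
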